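/- Let S = {P_1,…,P_L} be generic sparse Laurent polynomials as above, with P_l = c_l T_l + Σ_{h=1}^{h_l} c_{l,h} T_{l,h} for monomials T_l, T_{l,h} in y_1^{±1},…,y_{L-1}^{±1}, all coefficients algebraically independent over ℚ. Set ε_l := −Σ_h c_{l,h} T_{l,h} / T_l in the field ℚ(c_{l,h}, y_j). Then the elimination ideal (S) ∩ ℚ[C], where (S) is generated by the P_l in ℚ[C][y^{±}], is a prime ideal, and a polynomial G ∈ ℚ[C] lies in it if and only if G vanishes when each c_l is replaced by ε_l (with the other coefficients c_{l,h} left as themselves). -/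

import Mathlib

open Finset

/-- coefficient ring `ℚ[C]`, `C = {c_l : l} ∪ {c_{l,h} : l,h}`. -/
abbrev CRing (L : ℕ) (h : Fin L → ℕ) : Type :=
  MvPolynomial (Fin L ⊕ (Σ l : Fin L, Fin (h l))) ℚ

/-- the rational function field `ℚ(c_{l,h}, y_j)`. -/
abbrev RatFld (L m : ℕ) (h : Fin L → ℕ) : Type :=
  FractionRing (MvPolynomial ((Σ l : Fin L, Fin (h l)) ⊕ Fin m) ℚ)

open MvPolynomial AddMonoidAlgebra

noncomputable section Aux
variable (L m : ℕ) (h : Fin L → ℕ)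

abbrev BRing : Type := MvPolynomial (Σ l : Fin L, Fin (h l)) ℚ
abbrev QRing : Type := MvPolynomial ((Σ l : Fin L, Fin (h l)) ⊕ Fin m) ℚ
abbrev ALaur : Type := AddMonoidAlgebra (CRing L h) (Fin m →₀ ℤ)
abbrev BLaur : Type := AddMonoidAlgebra (BRing L h) (Fin m →₀ ℤ)

/-- `ψ`, concretely. -/
abbrev ψD : QRing L m h →+* RatFld L m h := algebraMap _ _

lemma ψD_inj : Function.Injective (ψD L m h) :=
  IsFractionRing.injective _ _

lemma y_ne (j : Fin m) : ψD L m h (X (Sum.inr j)) ≠ 0 := by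
  intro H
  have : (X (Sum.inr j) : QRing L m h) = 0 := by
    apply ψD_inj L m h; rw [H, map_zero]
  exact X_ne_zero _ this

def uF (e : Multiplicative (Fin m →₀ ℤ)) : RatFld L m h :=
  ∏ j, (ψD L m h (X (Sum.inr j))) ^ ((Multiplicative.toAdd e) j)

/-- Laurent monomials, as a monoid hom. -/
def uH : Multiplicative (Fin m →₀ ℤ) →* RatFld L m h where
  toFun := uF L m h
  map_one' := by
    unfold uF
    simp only [toAdd_one, Finsupp.coe_zero, Pi.zero_apply, zpow_zero, Finset.prod_const_one]
  map_mul' a b := by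
    show uF L m h (a * b) = uF L m h a * uF L m h b
    unfold uF
    rw [← Finset.prod_mul_distrib]
    exact Finset.prod_congr rfl fun j _ => by
      rw [← zpow_add₀ (y_ne L m h j)]; rfl

lemma uH_apply (e : Fin m →₀ ℤ) :
    uH L m h (Multiplicative.ofAdd e) = ∏ j, (ψD L m h (X (Sum.inr j))) ^ (e j) := rfl

/-- lift a coefficient hom to the Laurent ring over `CRing`. -/
def ΦA (f : CRing L h →+* RatFld L m h) : ALaur L m h →+* RatFld L m h :=
  liftNCRingHom f (uH L m h) (fun _ _ => Commute.all _ _)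

lemma ΦA_single (f : CRing L h →+* RatFld L m h) (e : Fin m →₀ ℤ) (b : CRing L h) :
    ΦA L m h f (single e b) = f b * uH L m h (Multiplicative.ofAdd e) :=
  liftNC_single _ _ _ _

def fB : BRing L h →+* RatFld L m h :=
  (ψD L m h).comp (rename Sum.inl).toRingHom

lemma fB_inj : Function.Injective (fB L m h) :=
  (ψD_inj L m h).comp (rename_injective _ Sum.inl_injective)

def ΦB : BLaur L m h →+* RatFld L m h :=
  liftNCRingHom (fB L m h) (uH L m h) (fun _ _ => Commute.all _ _)

lemma ΦB_single (e : Fin m →₀ ℤ) (b : BRing L h) :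
    ΦB L m h (single e b) = fB L m h b * uH L m h (Multiplicative.ofAdd e) :=
  liftNC_single _ _ _ _


/-- separating the `y` variables. -/
def χD : QRing L m h →+* MvPolynomial (Fin m) (BRing L h) :=
  (sumToIter ℚ (Fin m) (Σ l : Fin L, Fin (h l))).comp (rename (Sum.swap)).toRingHom

lemma χD_rename_inl (b : BRing L h) : χD L m h (rename Sum.inl b) = C b := by
  have hsw : (Sum.swap ∘ Sum.inl : (Σ l : Fin L, Fin (h l)) → Fin m ⊕ (Σ l : Fin L, Fin (h l))) = Sum.inr :=
    funext fun _ => rfl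
  show (sumToIter ℚ (Fin m) (Σ l : Fin L, Fin (h l))) (rename Sum.swap (rename Sum.inl b)) = C b
  rw [rename_rename, hsw]
  induction b using MvPolynomial.induction_on with
  | C a => rw [rename_C, sumToIter_C]
  | add p q hp hq => rw [map_add, map_add, hp, hq, map_add]
  | mul_X p n hp => rw [map_mul, rename_X, map_mul, hp, sumToIter_Xr, ← map_mul]

lemma χD_Xr (j : Fin m) : χD L m h (X (Sum.inr j)) = X j := by
  show (sumToIter ℚ (Fin m) (Σ l : Fin L, Fin (h l))) (rename Sum.swap (X (Sum.inr j))) = X j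
  rw [rename_X]
  exact sumToIter_Xl _ _ _ _

lemma ΦB_injective : Function.Injective (ΦB L m h) := by
  rw [injective_iff_map_eq_zero]
  intro x hx
  set s : Finset (Fin m →₀ ℤ) := x.coeff.support with hs
  -- exponent shift
  set d : Fin m → ℕ := fun j => s.sup fun e => (-(e j)).toNat with hdd
  have hd : ∀ e ∈ s, ∀ j : Fin m, 0 ≤ e j + (d j : ℤ) := by
    intro e he j
    have h1 : (-(e j)).toNat ≤ d j := Finset.le_sup (f := fun e => (-(e j)).toNat) he
    omega
  -- the numerator polynomial
  set p : QRing L m h :=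
    ∑ e ∈ s, (rename Sum.inl (x.coeff e)) * ∏ j, (X (Sum.inr j) : QRing L m h) ^ (e j + (d j : ℤ)).toNat
    with hp
  have hΦBx : ΦB L m h x = ∑ e ∈ s, fB L m h (x.coeff e) * uH L m h (Multiplicative.ofAdd e) := by
    conv_lhs => rw [← AddMonoidAlgebra.sum_coeff_single x]
    rw [Finsupp.sum, map_sum]
    exact Finset.sum_congr rfl fun e _ => ΦB_single L m h e (x.coeff e)
  have hψp : ψD L m h p =
      (∑ e ∈ s, fB L m h (x.coeff e) * uH L m h (Multiplicative.ofAdd e))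
        * ∏ j, (ψD L m h (X (Sum.inr j))) ^ (d j : ℤ) := by
    rw [hp, map_sum, Finset.sum_mul]
    refine Finset.sum_congr rfl fun e he => ?_
    rw [map_mul, map_prod]
    have hmon : ∀ j : Fin m,
        ψD L m h ((X (Sum.inr j) : QRing L m h) ^ (e j + (d j : ℤ)).toNat)
          = (ψD L m h (X (Sum.inr j))) ^ (e j) * (ψD L m h (X (Sum.inr j))) ^ (d j : ℤ) := by
      intro j
      rw [map_pow, ← zpow_natCast, Int.toNat_of_nonneg (hd e he j), zpow_add₀ (y_ne L m h j)]
    rw [Finset.prod_congr rfl fun j _ => hmon j, Finset.prod_mul_distrib]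
    rw [uH_apply, mul_assoc]
    rfl
  have hp0 : p = 0 := by
    apply ψD_inj L m h
    rw [hψp, ← hΦBx, hx, zero_mul, map_zero]
  -- now extract coefficients
  set nE : (Fin m →₀ ℤ) → (Fin m →₀ ℕ) :=
    fun e => Finsupp.equivFunOnFinite.symm fun j => (e j + (d j : ℤ)).toNat with hnE
  have hnEapp : ∀ e j, nE e j = (e j + (d j : ℤ)).toNat := fun e j => rfl
  have hχp : χD L m h p = ∑ e ∈ s, monomial (nE e) (x.coeff e) := by
    rw [hp, map_sum]
    refine Finset.sum_congr rfl fun e _ => ?_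
    rw [map_mul, map_prod, χD_rename_inl]
    rw [monomial_eq, Finsupp.prod_pow]
    congr 1
    refine Finset.prod_congr rfl fun j _ => ?_
    rw [map_pow, χD_Xr, hnEapp]
  have hxz : ∀ e0 ∈ s, x.coeff e0 = 0 := by
    intro e0 he0
    have hcoeff : coeff (nE e0) (χD L m h p) = x.coeff e0 := by
      rw [hχp, MvPolynomial.coeff_sum]
      rw [Finset.sum_eq_single e0 ?_ ?_]
      · rw [coeff_monomial, if_pos rfl]
      · intro e he hne
        rw [coeff_monomial, if_neg]
        intro hEq
        apply hne
        ext j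
        have h1 := congrArg (fun f => (f j : ℤ)) hEq
        simp only [hnEapp] at h1
        rw [Int.toNat_of_nonneg (hd e he j), Int.toNat_of_nonneg (hd e0 he0 j)] at h1
        omega
      · intro habs; exact absurd he0 habs
    rw [hp0, map_zero, MvPolynomial.coeff_zero] at hcoeff
    exact hcoeff.symm
  refine AddMonoidAlgebra.ext (Finsupp.ext fun e => ?_)
  show x.coeff e = 0
  by_cases he : e ∈ s
  · exact hxz e he
  · exact Finsupp.notMem_support_iff.mp he


lemma algMap_A (c : CRing L h) :
    algebraMap (CRing L h) (ALaur L m h) c = single 0 c := by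
  have h1 := congrFun (AddMonoidAlgebra.coe_algebraMap (R := CRing L h) (A := CRing L h)
    (M := Fin m →₀ ℤ)) c
  simpa using h1

lemma algMap_QB (r : ℚ) :
    algebraMap ℚ (BLaur L m h) r = single 0 (C r) := by
  have h1 := congrFun (AddMonoidAlgebra.coe_algebraMap (R := ℚ) (A := BRing L h)
    (M := Fin m →₀ ℤ)) r
  simpa [MvPolynomial.algebraMap_eq] using h1

/-- the inclusion `B[y^±] → C[y^±]`. -/
def incD : BLaur L m h →+* ALaur L m h :=
  liftNCRingHom ((algebraMap (CRing L h) (ALaur L m h)).comp (rename Sum.inr).toRingHom)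
    (AddMonoidAlgebra.of _ _) (fun _ _ => Commute.all _ _)

lemma incD_single (e : Fin m →₀ ℤ) (b : BRing L h) :
    incD L m h (single e b) = single e (rename Sum.inr b) := by
  have h1 : incD L m h (single e b)
      = (algebraMap (CRing L h) (ALaur L m h)) (rename Sum.inr b)
        * (AddMonoidAlgebra.of (CRing L h) (Fin m →₀ ℤ)) (Multiplicative.ofAdd e) :=
    liftNC_single _ _ _ _
  rw [h1, AddMonoidAlgebra.of_apply, algMap_A, single_mul_single, zero_add, mul_one]
  rfl

variable (T : Fin L → (Fin m →₀ ℤ)) (T' : (l : Fin L) → Fin (h l) → (Fin m →₀ ℤ))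

def PD (l : Fin L) : ALaur L m h :=
  single (T l) (X (Sum.inl l))
    + ∑ k : Fin (h l), single (T' l k) (X (Sum.inr ⟨l, k⟩))

def eBD (l : Fin L) : BLaur L m h :=
  -∑ k : Fin (h l), single (T' l k - T l) (X (⟨l, k⟩ : Σ l : Fin L, Fin (h l)) : BRing L h)

def σBD : CRing L h →+* BLaur L m h :=
  eval₂Hom (algebraMap ℚ _)
    (Sum.elim (fun l => eBD L m h T T' l) (fun c => single 0 (X c)))

def ymD (e : Fin m →₀ ℤ) : RatFld L m h :=
  ∏ j, (ψD L m h (X (Sum.inr j))) ^ (e j)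

lemma uH_ymD (e : Fin m →₀ ℤ) : uH L m h (Multiplicative.ofAdd e) = ymD L m h e := rfl

def εDf (l : Fin L) : RatFld L m h :=
  -∑ k : Fin (h l), ψD L m h (X (Sum.inl ⟨l, k⟩)) * ymD L m h (T' l k - T l)

def φDf : CRing L h →+* RatFld L m h :=
  eval₂Hom ((ψD L m h).comp C)
    (Sum.elim (fun l => εDf L m h T T' l) (fun c => ψD L m h (X (Sum.inl c))))

lemma uH_zero : uH L m h (Multiplicative.ofAdd (0 : Fin m →₀ ℤ)) = 1 := by
  rw [ofAdd_zero, map_one]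

lemma ΦB_comp_σB : (ΦB L m h).comp (σBD L m h T T') = φDf L m h T T' := by
  apply MvPolynomial.ringHom_ext
  · intro r
    rw [RingHom.comp_apply]
    show ΦB L m h (σBD L m h T T' (C r)) = φDf L m h T T' (C r)
    rw [σBD, eval₂Hom_C, φDf, eval₂Hom_C, algMap_QB, ΦB_single, uH_zero, mul_one]
    show ψD L m h (rename Sum.inl (C r)) = ψD L m h (C r)
    rw [rename_C]
  · intro i
    rw [RingHom.comp_apply]
    show ΦB L m h (σBD L m h T T' (X i)) = φDf L m h T T' (X i)
    rw [σBD, eval₂Hom_X', φDf, eval₂Hom_X']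
    cases i with
    | inl l =>
      simp only [Sum.elim_inl]
      rw [eBD, εDf, map_neg, map_sum]
      congr 1
      refine Finset.sum_congr rfl fun k _ => ?_
      rw [ΦB_single, uH_ymD]
      congr 1
      show ψD L m h (rename Sum.inl (X (⟨l, k⟩ : Σ l : Fin L, Fin (h l)))) = _
      rw [rename_X]
    | inr c =>
      simp only [Sum.elim_inr]
      rw [ΦB_single, uH_zero, mul_one]
      show ψD L m h (rename Sum.inl (X c)) = _
      rw [rename_X]

lemma ΦA_algebraMap (f : CRing L h →+* RatFld L m h) (G : CRing L h) :
    ΦA L m h f (algebraMap (CRing L h) (ALaur L m h) G) = f G := by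
  rw [algMap_A, ΦA_single, uH_zero, mul_one]

lemma ΦA_P (l : Fin L) : ΦA L m h (φDf L m h T T') (PD L m h T T' l) = 0 := by
  rw [PD, map_add, map_sum, ΦA_single]
  have h1 : ∀ k : Fin (h l),
      ΦA L m h (φDf L m h T T') (single (T' l k) (X (Sum.inr (⟨l, k⟩ : Σ l : Fin L, Fin (h l)))))
        = ψD L m h (X (Sum.inl (⟨l, k⟩ : Σ l : Fin L, Fin (h l))))
            * uH L m h (Multiplicative.ofAdd (T' l k)) := by
    intro k
    rw [ΦA_single]
    congr 1
    rw [φDf, eval₂Hom_X']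
    simp only [Sum.elim_inr]
  rw [Finset.sum_congr rfl fun k _ => h1 k]
  have h2 : φDf L m h T T' (X (Sum.inl l)) = εDf L m h T T' l := by
    rw [φDf, eval₂Hom_X']
    simp only [Sum.elim_inl]
  rw [h2, εDf, neg_mul, Finset.sum_mul]
  rw [Finset.sum_congr rfl fun k _ => ?_, neg_add_cancel]
  rw [mul_assoc, ← uH_ymD, ← map_mul, ← ofAdd_add, sub_add_cancel]

lemma sub_mem_span (G : CRing L h) :
    algebraMap (CRing L h) (ALaur L m h) G - incD L m h (σBD L m h T T' G)
      ∈ Ideal.span (Set.range (PD L m h T T')) := by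
  set I := Ideal.span (Set.range (PD L m h T T')) with hI
  have hgen : ∀ l : Fin L,
      algebraMap (CRing L h) (ALaur L m h) (X (Sum.inl l))
        - incD L m h (eBD L m h T T' l) ∈ I := by
    intro l
    have key : single (-(T l)) (1 : CRing L h) * PD L m h T T' l
        = algebraMap (CRing L h) (ALaur L m h) (X (Sum.inl l))
          - incD L m h (eBD L m h T T' l) := by
      rw [PD, mul_add, single_mul_single, neg_add_cancel, one_mul, Finset.mul_sum]
      rw [algMap_A, eBD, map_neg, map_sum, sub_neg_eq_add]
      congr 1
      refine Finset.sum_congr rfl fun k _ => ?_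
      rw [single_mul_single, one_mul, incD_single, rename_X]
      congr 1
      rw [neg_add_eq_sub]
    rw [← key]
    exact Ideal.mul_mem_left _ _ (Ideal.subset_span ⟨l, rfl⟩)
  have main : (Ideal.Quotient.mk I).comp (algebraMap (CRing L h) (ALaur L m h))
      = (Ideal.Quotient.mk I).comp ((incD L m h).comp (σBD L m h T T')) := by
    apply MvPolynomial.ringHom_ext
    · intro r
      simp only [RingHom.comp_apply]
      congr 1
      rw [σBD, eval₂Hom_C, algMap_QB, incD_single, rename_C]
      rw [show (C r : CRing L h) = algebraMap ℚ (CRing L h) r from rfl]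
      rw [algMap_A]
    · intro i
      cases i with
      | inl l =>
        simp only [RingHom.comp_apply]
        rw [Ideal.Quotient.mk_eq_mk_iff_sub_mem]
        rw [σBD, eval₂Hom_X']
        simp only [Sum.elim_inl]
        exact hgen l
      | inr c =>
        simp only [RingHom.comp_apply]
        congr 1
        rw [σBD, eval₂Hom_X']
        simp only [Sum.elim_inr]
        rw [incD_single, rename_X, algMap_A]
  rw [← Ideal.Quotient.mk_eq_mk_iff_sub_mem]
  exact RingHom.congr_fun main G

lemma mem_comap_iff (G : CRing L h) :
    G ∈ Ideal.comap (algebraMap (CRing L h) (ALaur L m h))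
        (Ideal.span (Set.range (PD L m h T T')))
      ↔ φDf L m h T T' G = 0 := by
  rw [Ideal.mem_comap]
  constructor
  · intro hG
    have hker : Ideal.span (Set.range (PD L m h T T'))
        ≤ RingHom.ker (ΦA L m h (φDf L m h T T')) := by
      rw [Ideal.span_le]
      rintro _ ⟨l, rfl⟩
      exact ΦA_P L m h T T' l
    have h0 := hker hG
    rw [RingHom.mem_ker, ΦA_algebraMap] at h0
    exact h0
  · intro hG
    have h0 : σBD L m h T T' G = 0 := by
      apply ΦB_injective L m h
      rw [map_zero, ← RingHom.comp_apply, ΦB_comp_σB]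
      exact hG
    have h1 := sub_mem_span L m h T T' G
    rw [h0, map_zero, sub_zero] at h1
    exact h1

lemma comap_eq_ker :
    Ideal.comap (algebraMap (CRing L h) (ALaur L m h))
        (Ideal.span (Set.range (PD L m h T T')))
      = RingHom.ker (φDf L m h T T') := by
  ext G
  rw [mem_comap_iff, RingHom.mem_ker]

end Aux

/-- Lemma lem-prime1: let `S = {P_1,…,P_L}` be generic sparse
Laurent polynomials in `y_1,…,y_m`, `P_l = c_l T_l + Σ_h c_{l,h} T_{l,h}`,
all coefficients independent indeterminates over ℚ, the `T`'s Laurent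
monomials.  Set `ε_l := −Σ_h c_{l,h} T_{l,h}/T_l` in `ℚ(c_{l,h}, y_j)`.
Then the elimination ideal `(S) ∩ ℚ[C]` (the preimage in `ℚ[C]` of the ideal
generated by the `P_l` in `ℚ[C][y^{±}]`) is prime, and `G ∈ (S) ∩ ℚ[C]` iff
`G` vanishes at the generic zero `ε`, i.e. after substituting `ε_l` for `c_l`
and leaving the `c_{l,h}` fixed. -/
theorem elimination_ideal_isPrime_and_generic_zero
    (L m : ℕ) (h : Fin L → ℕ)
    (T : Fin L → (Fin m →₀ ℤ)) (T' : (l : Fin L) → Fin (h l) → (Fin m →₀ ℤ))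
    (P : Fin L → AddMonoidAlgebra (CRing L h) (Fin m →₀ ℤ))
    (hP : ∀ l, P l =
      AddMonoidAlgebra.single (T l) (MvPolynomial.X (Sum.inl l))
        + ∑ k : Fin (h l),
            AddMonoidAlgebra.single (T' l k) (MvPolynomial.X (Sum.inr ⟨l, k⟩)))
    (ψ : MvPolynomial ((Σ l : Fin L, Fin (h l)) ⊕ Fin m) ℚ →+* RatFld L m h)
    (hψ : ψ = algebraMap _ _)
    -- the Laurent monomial `y^e` in the rational function field
    (ym : (Fin m →₀ ℤ) → RatFld L m h)
    (hym : ∀ e, ym e = ∏ j, (ψ (MvPolynomial.X (Sum.inr j))) ^ (e j))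
    (ε : Fin L → RatFld L m h)
    (hε : ∀ l, ε l =
      -∑ k : Fin (h l), ψ (MvPolynomial.X (Sum.inl ⟨l, k⟩)) * ym (T' l k - T l))
    (φ : CRing L h →+* RatFld L m h)
    (hφ : φ = MvPolynomial.eval₂Hom (ψ.comp MvPolynomial.C)
      (Sum.elim (fun l => ε l) (fun c => ψ (MvPolynomial.X (Sum.inl c))))) :
    (Ideal.comap (algebraMap (CRing L h) (AddMonoidAlgebra (CRing L h) (Fin m →₀ ℤ)))
        (Ideal.span (Set.range P))).IsPrime
      ∧ ∀ G : CRing L h,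
        G ∈ Ideal.comap (algebraMap (CRing L h)
            (AddMonoidAlgebra (CRing L h) (Fin m →₀ ℤ)))
          (Ideal.span (Set.range P)) ↔ φ G = 0 := by
  subst hψ
  have hymf : ym = ymD L m h := funext hym
  subst hymf
  have hεf : ε = εDf L m h T T' := funext hε
  subst hεf
  have hφf : φ = φDf L m h T T' := hφ
  subst hφf
  have hPf : P = PD L m h T T' := funext hP
  subst hPf
  refine ⟨?_, fun G => mem_comap_iff L m h T T' G⟩
  rw [comap_eq_ker L m h T T']
  exact RingHom.ker_isPrime _
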